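/- Let a family of intervals be partitioned into c chains, and split each chain into consecutive blocks of size at most h (taking h intervals at a time from the bottom). If g^h_x denotes the number of block-bottom intervals containing x and g_x the number of all intervals containing x, then for every real x: (g^h_x − c)·h ≤ g_x. -/

import Mathlib

open Classical in
lemma chain_bound_aux (h : ℕ) (hh : 0 < h) (m : ℕ) (I : Fin m → Set ℝ)
    (hchain : ∀ p q : Fin m, p ≤ q → I q ⊆ I p) (x : ℝ) :
    ((Finset.univ.filter (fun p : Fin m => (p : ℕ) % h = 0 ∧ x ∈ I p)).card - 1) * h
      ≤ (Finset.univ.filter (fun p : Fin m => x ∈ I p)).card := by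
  set B := Finset.univ.filter (fun p : Fin m => (p : ℕ) % h = 0 ∧ x ∈ I p) with hB
  set S := Finset.univ.filter (fun p : Fin m => x ∈ I p) with hS
  rcases B.eq_empty_or_nonempty with hBe | hBne
  · simp [hBe]
  · obtain ⟨q, hqB, hqle⟩ : ∃ q ∈ B, ∀ p ∈ B, p ≤ q :=
      ⟨B.max' hBne, B.max'_mem hBne, fun p hp => B.le_max' p hp⟩
    have hqx : x ∈ I q := by
      have := Finset.mem_filter.mp hqB
      exact this.2.2
    -- B.card ≤ q/h + 1
    have hBcard : B.card ≤ (q : ℕ) / h + 1 := by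
      have : B.card ≤ (Finset.range ((q : ℕ) / h + 1)).card := by
        apply Finset.card_le_card_of_injOn (fun p : Fin m => (p : ℕ) / h)
        · intro p hp
          have hple : p ≤ q := hqle p hp
          simp only [Finset.mem_coe, Finset.mem_range]
          have : (p : ℕ) / h ≤ (q : ℕ) / h := Nat.div_le_div_right hple
          omega
        · intro p hp p' hp' hpp'
          have h1 := (Finset.mem_filter.mp hp).2.1
          have h2 := (Finset.mem_filter.mp hp').2.1
          have e1 : (p : ℕ) / h * h = (p : ℕ) :=
            Nat.div_mul_cancel (Nat.dvd_of_mod_eq_zero h1)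
          have e2 : (p' : ℕ) / h * h = (p' : ℕ) :=
            Nat.div_mul_cancel (Nat.dvd_of_mod_eq_zero h2)
          dsimp only at hpp'
          have : (p : ℕ) = (p' : ℕ) := by rw [← e1, ← e2, hpp']
          exact Fin.ext this
      simpa using this
    -- S.card ≥ q + 1
    have hScard : (q : ℕ) + 1 ≤ S.card := by
      have : ((q : ℕ) + 1) = (Finset.range ((q : ℕ) + 1)).card := by simp
      rw [this]
      apply Finset.card_le_card_of_injOn
        (fun j => (⟨j % m, Nat.mod_lt _ (Nat.lt_of_le_of_lt (Nat.zero_le _) q.isLt)⟩ : Fin m))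
      · intro j hj
        simp only [Finset.mem_coe, Finset.mem_range] at hj
        have hjq : j ≤ (q : ℕ) := by omega
        have hjm : j < m := lt_of_le_of_lt hjq q.isLt
        have : j % m = j := Nat.mod_eq_of_lt hjm
        rw [hS, Finset.mem_coe, Finset.mem_filter]
        refine ⟨Finset.mem_univ _, ?_⟩
        have hle : (⟨j % m, Nat.mod_lt _ (Nat.lt_of_le_of_lt (Nat.zero_le _) q.isLt)⟩ : Fin m) ≤ q := by
          rw [Fin.le_def]
          show j % m ≤ (q : ℕ)
          rw [this]; exact hjq
        exact hchain _ _ hle hqx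
      · intro j hj j' hj' hjj'
        simp only [Finset.mem_coe, Finset.mem_range] at hj hj'
        have e1 : j % m = j := Nat.mod_eq_of_lt (lt_of_lt_of_le hj (Nat.succ_le_of_lt q.isLt))
        have e2 : j' % m = j' := Nat.mod_eq_of_lt (lt_of_lt_of_le hj' (Nat.succ_le_of_lt q.isLt))
        have : j % m = j' % m := congrArg Fin.val hjj'
        omega
    have hB1 : B.card - 1 ≤ (q : ℕ) / h := Nat.sub_le_of_le_add hBcard
    have h1 : (B.card - 1) * h ≤ ((q : ℕ) / h) * h := Nat.mul_le_mul_right h hB1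
    have h2 : ((q : ℕ) / h) * h ≤ (q : ℕ) := Nat.div_mul_le_self _ _
    exact h1.trans (h2.trans (le_trans (Nat.le_succ _) hScard))

open Classical in
/-- A family of intervals partitioned into c chains, each chain split into consecutive
blocks of size at most h from the bottom (block bottoms sit at positions divisible
by h).  If g^h_x is the number of block bottoms containing x and g_x the number of
all intervals containing x, then (g^h_x - c) * h ≤ g_x. -/
theorem stmt_7 (c h : ℕ) (hh : 0 < h) (m : Fin c → ℕ)
    (I : (k : Fin c) → Fin (m k) → Set ℝ)
    (hchain : ∀ k : Fin c, ∀ p q : Fin (m k), p ≤ q → I k q ⊆ I k p) (x : ℝ) :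
    ((Finset.univ.filter
        (fun kp : Σ k : Fin c, Fin (m k) => (kp.2 : ℕ) % h = 0 ∧ x ∈ I kp.1 kp.2)).card
      - c) * h
      ≤ (Finset.univ.filter
          (fun kp : Σ k : Fin c, Fin (m k) => x ∈ I kp.1 kp.2)).card := by
  have key : ∀ (P : (Σ k : Fin c, Fin (m k)) → Prop) (_ : DecidablePred P),
      (Finset.univ.filter P).card
        = ∑ k : Fin c, (Finset.univ.filter (fun p : Fin (m k) => P ⟨k, p⟩)).card := by
    intro P _
    rw [← Finset.card_sigma]
    congr 1
    ext ⟨k, p⟩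
    simp [Finset.mem_sigma]
  rw [key, key]
  set B := fun k : Fin c =>
    (Finset.univ.filter (fun p : Fin (m k) => (p : ℕ) % h = 0 ∧ x ∈ I k p)).card
  set S := fun k : Fin c =>
    (Finset.univ.filter (fun p : Fin (m k) => x ∈ I k p)).card
  have hsub : (∑ k, B k) - c ≤ ∑ k, (B k - 1) := by
    have : ∑ k, B k ≤ (∑ k, (B k - 1)) + c := by
      have : ∀ k : Fin c, B k ≤ (B k - 1) + 1 := fun k => by omega
      calc ∑ k, B k ≤ ∑ k, ((B k - 1) + 1) := Finset.sum_le_sum fun k _ => this k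
        _ = (∑ k, (B k - 1)) + c := by rw [Finset.sum_add_distrib]; simp
    omega
  calc ((∑ k, B k) - c) * h ≤ (∑ k, (B k - 1)) * h := Nat.mul_le_mul_right _ hsub
    _ = ∑ k, (B k - 1) * h := by rw [Finset.sum_mul]
    _ ≤ ∑ k, S k := Finset.sum_le_sum fun k _ =>
        chain_bound_aux h hh (m k) (I k) (hchain k) x
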